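/- Let d ≥ 1, let ε : Fin d → ℝ be nondecreasing, and let β_h < β_w be real inverse temperatures. Let π^h and π^w be the Gibbs distributions at β_h and β_w, respectively. Then for every index n, the tail sum ∑_{k=n}^{d} π^w_k ≤ ∑_{k=n}^{d} π^h_k; equivalently, the hotter Gibbs state places at least as much total weight on every upper set of energy levels as the warmer one. -/

import Mathlib

open Finset Real

/-- The Gibbs distribution at inverse temperature `β` for energy levels `ε`. -/
noncomputable def gibbs {d : ℕ} (β : ℝ) (ε : Fin d → ℝ) : Fin d → ℝ :=
  fun n => Real.exp (-β * ε n) / ∑ m, Real.exp (-β * ε m)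

/-- For nondecreasing energy levels and `β_h < β_w`, every tail sum of the warm
Gibbs distribution is bounded by the corresponding tail sum of the hot one. -/
theorem gibbs_tail_sum_le {d : ℕ} (hd : 1 ≤ d) (ε : Fin d → ℝ) (hε : Monotone ε)
    (βh βw : ℝ) (hβ : βh < βw) :
    ∀ n : Fin d,
      ∑ k ∈ Finset.Ici n, gibbs βw ε k ≤ ∑ k ∈ Finset.Ici n, gibbs βh ε k := by
  intro n
  set Ah := ∑ k ∈ Finset.Ici n, Real.exp (-βh * ε k) with hAh
  set Aw := ∑ k ∈ Finset.Ici n, Real.exp (-βw * ε k) with hAw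
  set Bh := ∑ k ∈ Finset.Iio n, Real.exp (-βh * ε k) with hBh
  set Bw := ∑ k ∈ Finset.Iio n, Real.exp (-βw * ε k) with hBw
  have hAhpos : 0 < Ah :=
    Finset.sum_pos (fun k _ => Real.exp_pos _) ⟨n, Finset.mem_Ici.2 le_rfl⟩
  have hAwpos : 0 < Aw :=
    Finset.sum_pos (fun k _ => Real.exp_pos _) ⟨n, Finset.mem_Ici.2 le_rfl⟩
  have hBhnn : 0 ≤ Bh := Finset.sum_nonneg fun k _ => (Real.exp_pos _).le
  have hBwnn : 0 ≤ Bw := Finset.sum_nonneg fun k _ => (Real.exp_pos _).le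
  have hsplit : ∀ β : ℝ, ∑ m, Real.exp (-β * ε m)
      = (∑ k ∈ Finset.Iio n, Real.exp (-β * ε k)) +
        (∑ k ∈ Finset.Ici n, Real.exp (-β * ε k)) := by
    intro β
    rw [← Finset.sum_filter_add_sum_filter_not Finset.univ (fun k => k < n)]
    congr 1
    · apply Finset.sum_congr _ (fun _ _ => rfl)
      ext k; simp
    · apply Finset.sum_congr _ (fun _ _ => rfl)
      ext k; simp [not_lt]
  have key : Aw * Bh ≤ Ah * Bw := by
    rw [hAw, hBh, hAh, hBw, Finset.sum_mul_sum, Finset.sum_mul_sum]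
    apply Finset.sum_le_sum
    intro k hk
    apply Finset.sum_le_sum
    intro m hm
    rw [← Real.exp_add, ← Real.exp_add]
    apply Real.exp_le_exp.2
    have hmk : ε m ≤ ε k := hε ((Finset.mem_Iio.1 hm).le.trans (Finset.mem_Ici.1 hk))
    nlinarith [hβ, hmk]
  have hw : ∑ k ∈ Finset.Ici n, gibbs βw ε k = Aw / (Bw + Aw) := by
    simp only [gibbs, ← Finset.sum_div, hsplit βw]
    rfl
  have hh : ∑ k ∈ Finset.Ici n, gibbs βh ε k = Ah / (Bh + Ah) := by
    simp only [gibbs, ← Finset.sum_div, hsplit βh]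
    rfl
  rw [hw, hh, div_le_div_iff₀ (by linarith) (by linarith)]
  nlinarith
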